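/- Let (q_n)_{n≥1} be an enumeration of ℚ ∩ [0,1]. For each n define f_n : [0,1] → [−1,1] by f_n(x) = sin(1/(x − q_n)) for x ≠ q_n and f_n(q_n) = 0, and let f(x) = Σ_{n=1}^∞ 2^{−n} f_n(x). Let X = [0,1] × [−1,1] and E = {(x, f(x)) : x ∈ [0,1]}. Then E is an H₁-retract of X: there exists a function r : X → E with r(p) = p for all p ∈ E such that the preimage under r of every closed subset of E is a G_δ-set in X. -/

import Mathlib

open Set Filter Topology Metric

/-- Preimage of a Gδ set under a continuous map is Gδ. -/
lemma isGδ_preimage_of_continuous {X Y : Type*} [TopologicalSpace X] [TopologicalSpace Y]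
    {s : Set Y} (hs : IsGδ s) {g : X → Y} (hg : Continuous g) : IsGδ (g ⁻¹' s) := by
  obtain ⟨T, hTopen, hTc, rfl⟩ := hs
  rw [sInter_eq_biInter, preimage_iInter₂]
  exact IsGδ.biInter hTc fun t ht => ((hTopen t ht).preimage hg).isGδ

/-- The truncated approximants: continuous everywhere. -/
lemma psi_cont (a : ℝ) (m : ℕ) :
    Continuous (fun x : ℝ => Real.sin (1 / (x - a)) * min 1 ((m : ℝ) * |x - a|)) := by
  rw [continuous_iff_continuousAt]
  intro x
  rcases eq_or_ne x a with rfl | hx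
  · have h0 : Real.sin (1 / (x - x)) * min 1 ((m : ℝ) * |x - x|) = 0 := by simp
    show Tendsto (fun t : ℝ => Real.sin (1 / (t - x)) * min 1 ((m : ℝ) * |t - x|)) (𝓝 x)
      (𝓝 (Real.sin (1 / (x - x)) * min 1 ((m : ℝ) * |x - x|)))
    rw [h0]
    apply squeeze_zero_norm (a := fun t : ℝ => (m : ℝ) * |t - x|)
    · intro t
      rw [Real.norm_eq_abs, abs_mul]
      have h1 : |Real.sin (1 / (t - x))| ≤ 1 :=
        abs_le.mpr ⟨Real.neg_one_le_sin _, Real.sin_le_one _⟩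
      have hmin0 : (0:ℝ) ≤ min 1 ((m : ℝ) * |t - x|) :=
        le_min zero_le_one (by positivity)
      have h2 : |min 1 ((m : ℝ) * |t - x|)| ≤ (m : ℝ) * |t - x| := by
        rw [abs_of_nonneg hmin0]; exact min_le_right _ _
      calc |Real.sin (1 / (t - x))| * |min 1 ((m : ℝ) * |t - x|)|
          ≤ 1 * ((m : ℝ) * |t - x|) := mul_le_mul h1 h2 (abs_nonneg _) zero_le_one
        _ = (m : ℝ) * |t - x| := one_mul _
    · have : Continuous (fun t : ℝ => (m : ℝ) * |t - x|) := by fun_prop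
      have := this.tendsto x
      simpa using this
  · apply ContinuousAt.mul
    · exact Real.continuous_sin.continuousAt.comp
        (ContinuousAt.div continuousAt_const (by fun_prop) (sub_ne_zero.2 hx))
    · fun_prop

theorem graph_of_sum_of_sin_h1_retract
    (q : ℕ → ℝ) (hq_inj : Function.Injective q)
    (hq_range : Set.range q = {x : ℝ | x ∈ Set.Icc (0 : ℝ) 1 ∧ ∃ p : ℚ, (p : ℝ) = x})
    (f : ℝ → ℝ)
    (hf : ∀ x : ℝ, f x =
      ∑' n : ℕ, (1 / 2 : ℝ) ^ (n + 1) * (if x = q n then 0 else Real.sin (1 / (x - q n)))) :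
    ∃ r : (Set.Icc (0 : ℝ) 1 ×ˢ Set.Icc (-1 : ℝ) 1 : Set (ℝ × ℝ)) →
        {p : (Set.Icc (0 : ℝ) 1 ×ˢ Set.Icc (-1 : ℝ) 1 : Set (ℝ × ℝ)) |
          (p : ℝ × ℝ).2 = f (p : ℝ × ℝ).1},
      (∀ C : Set {p : (Set.Icc (0 : ℝ) 1 ×ˢ Set.Icc (-1 : ℝ) 1 : Set (ℝ × ℝ)) |
          (p : ℝ × ℝ).2 = f (p : ℝ × ℝ).1},
        IsClosed C → IsGδ (r ⁻¹' C)) ∧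
      ∀ p (hp : p ∈ {p : (Set.Icc (0 : ℝ) 1 ×ˢ Set.Icc (-1 : ℝ) 1 : Set (ℝ × ℝ)) |
          (p : ℝ × ℝ).2 = f (p : ℝ × ℝ).1}),
        (r p : (Set.Icc (0 : ℝ) 1 ×ˢ Set.Icc (-1 : ℝ) 1 : Set (ℝ × ℝ))) = p := by
  -- notation
  set X : Set (ℝ × ℝ) := Set.Icc (0 : ℝ) 1 ×ˢ Set.Icc (-1 : ℝ) 1 with hX
  -- the `if` in the definition of `f` is redundant since `sin (1/0) = 0`
  have hf' : ∀ x : ℝ, f x = ∑' n : ℕ, (1 / 2 : ℝ) ^ (n + 1) * Real.sin (1 / (x - q n)) := by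
    intro x
    rw [hf x]
    congr 1; funext n
    split_ifs with h
    · subst h; simp
    · rfl
  -- the summands and bounds
  have habs : ∀ x n, |(1 / 2 : ℝ) ^ (n + 1) * Real.sin (1 / (x - q n))| ≤ (1 / 2 : ℝ) ^ (n + 1) := by
    intro x n
    rw [abs_mul, abs_of_nonneg (by positivity : (0:ℝ) ≤ (1/2:ℝ)^(n+1))]
    have : |Real.sin (1 / (x - q n))| ≤ 1 :=
      abs_le.mpr ⟨Real.neg_one_le_sin _, Real.sin_le_one _⟩
    nlinarith [pow_pos (by norm_num : (0:ℝ) < 1/2) (n+1)]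
  have hbound_summable : Summable (fun n : ℕ => (1 / 2 : ℝ) ^ (n + 1)) := by
    have : Summable (fun n : ℕ => (1 / 2 : ℝ) ^ n) := summable_geometric_two
    exact (this.mul_right (1/2)).congr (fun n => by rw [← pow_succ])
  have hbound_tsum : ∑' n : ℕ, (1 / 2 : ℝ) ^ (n + 1) = 1 := by
    have h1 : (fun n : ℕ => (1 / 2 : ℝ) ^ (n + 1)) = fun n : ℕ => (1/2:ℝ)^n * (1/2) := by
      funext n; rw [← pow_succ]
    rw [h1, tsum_mul_right, tsum_geometric_two]; norm_num
  have hsummable : ∀ x, Summable (fun n : ℕ => (1 / 2 : ℝ) ^ (n + 1) * Real.sin (1 / (x - q n))) := by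
    intro x
    exact Summable.of_norm_bounded hbound_summable (fun n => by
      rw [Real.norm_eq_abs]; exact habs x n)
  -- |f x| ≤ 1
  have hfb : ∀ x, f x ∈ Set.Icc (-1 : ℝ) 1 := by
    intro x
    have : |f x| ≤ 1 := by
      rw [hf' x]
      calc |∑' n : ℕ, (1 / 2 : ℝ) ^ (n + 1) * Real.sin (1 / (x - q n))|
          ≤ ∑' n : ℕ, |(1 / 2 : ℝ) ^ (n + 1) * Real.sin (1 / (x - q n))| := by
            have := norm_tsum_le_tsum_norm (f := fun n : ℕ =>
              (1 / 2 : ℝ) ^ (n + 1) * Real.sin (1 / (x - q n)))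
              (Summable.of_nonneg_of_le (fun n => norm_nonneg _)
                (fun n => by rw [Real.norm_eq_abs]; exact habs x n) hbound_summable)
            simp only [Real.norm_eq_abs] at this
            exact this
        _ ≤ ∑' n : ℕ, (1 / 2 : ℝ) ^ (n + 1) := by
            apply Summable.tsum_le_tsum (fun n => habs x n) _ hbound_summable
            exact Summable.of_nonneg_of_le (fun n => abs_nonneg _)
              (fun n => habs x n) hbound_summable
        _ = 1 := hbound_tsum
    exact abs_le.mp this
  -- continuous approximants
  set g : ℕ → ℝ → ℝ := fun m x =>
    ∑ n ∈ Finset.range (m + 1),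
      (1 / 2 : ℝ) ^ (n + 1) * (Real.sin (1 / (x - q n)) * min 1 ((m : ℝ) * |x - q n|)) with hg
  have hgcont : ∀ m, Continuous (g m) := by
    intro m
    apply continuous_finset_sum
    intro n _
    exact continuous_const.mul (psi_cont (q n) m)
  -- pointwise convergence g m x → f x
  have hgconv : ∀ x, Tendsto (fun m => g m x) atTop (𝓝 (f x)) := by
    intro x
    rw [hf' x]
    have key : ∀ m, g m x = ∑' n : ℕ, (if n < m + 1 then
        (1 / 2 : ℝ) ^ (n + 1) * (Real.sin (1 / (x - q n)) * min 1 ((m : ℝ) * |x - q n|)) else 0) := by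
      intro m
      rw [tsum_eq_sum (s := Finset.range (m + 1))
        (fun n hn => by rw [if_neg (by simpa using hn)])]
      apply Finset.sum_congr rfl
      intro n hn
      rw [if_pos (Finset.mem_range.mp hn)]
    have : Tendsto (fun m => ∑' n : ℕ, (if n < m + 1 then
        (1 / 2 : ℝ) ^ (n + 1) * (Real.sin (1 / (x - q n)) * min 1 ((m : ℝ) * |x - q n|)) else 0))
        atTop (𝓝 (∑' n : ℕ, (1 / 2 : ℝ) ^ (n + 1) * Real.sin (1 / (x - q n)))) := by
      apply tendsto_tsum_of_dominated_convergence hbound_summable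
      · intro n
        rcases eq_or_ne x (q n) with hxq | hxq
        · -- x = q n : both sides are 0
          have hz : Real.sin (1 / (x - q n)) = 0 := by rw [hxq]; simp
          have : ∀ m : ℕ, (if n < m + 1 then
              (1 / 2 : ℝ) ^ (n + 1) * (Real.sin (1 / (x - q n)) * min 1 ((m : ℝ) * |x - q n|))
              else 0) = 0 := by
            intro m
            split_ifs with h
            · rw [hz]; ring
            · rfl
          rw [show (1 / 2 : ℝ) ^ (n + 1) * Real.sin (1 / (x - q n)) = 0 by rw [hz]; ring]
          have h4 := funext this
          rw [h4]
          exact tendsto_const_nhds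
        · -- x ≠ q n : eventually constant
          have hd : (0:ℝ) < |x - q n| := abs_pos.mpr (sub_ne_zero.2 hxq)
          obtain ⟨M, hM⟩ := exists_nat_gt (1 / |x - q n|)
          apply Tendsto.congr' (f₁ := fun _ : ℕ => (1 / 2 : ℝ) ^ (n + 1) * Real.sin (1 / (x - q n)))
          · filter_upwards [eventually_ge_atTop (max n M)] with m hm
            have hmn : n < m + 1 := Nat.lt_succ_of_le (le_trans (le_max_left _ _) hm)
            have hmM : (M:ℝ) ≤ (m:ℝ) := Nat.cast_le.mpr (le_trans (le_max_right _ _) hm)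
            have hone : (1:ℝ) ≤ (m : ℝ) * |x - q n| := by
              have h3 : 1 / |x - q n| ≤ (m:ℝ) := le_trans (le_of_lt hM) hmM
              exact (div_le_iff₀ hd).mp h3
            rw [if_pos hmn, min_eq_left hone, mul_one]
          · exact tendsto_const_nhds
      · filter_upwards with m n
        split_ifs with h
        · rw [Real.norm_eq_abs, abs_mul, abs_of_nonneg (by positivity : (0:ℝ) ≤ (1/2:ℝ)^(n+1))]
          have h1 : |Real.sin (1 / (x - q n))| ≤ 1 :=
            abs_le.mpr ⟨Real.neg_one_le_sin _, Real.sin_le_one _⟩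
          have hmin0 : (0:ℝ) ≤ min 1 ((m : ℝ) * |x - q n|) := le_min zero_le_one (by positivity)
          have h2 : |Real.sin (1 / (x - q n)) * min 1 ((m : ℝ) * |x - q n|)| ≤ 1 := by
            rw [abs_mul, abs_of_nonneg hmin0]
            calc |Real.sin (1 / (x - q n))| * min 1 ((m : ℝ) * |x - q n|)
                ≤ 1 * 1 := mul_le_mul h1 (min_le_left _ _) hmin0 zero_le_one
              _ = 1 := one_mul 1
          nlinarith [pow_pos (by norm_num : (0:ℝ) < 1/2) (n+1)]
        · have : ‖(0:ℝ)‖ ≤ (1/2:ℝ)^(n+1) := by rw [norm_zero]; positivity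
          simpa using this
    exact this.congr (fun m => (key m).symm)
  -- main lemma: for any closed F ⊆ ℝ×ℝ, {x | (x, f x) ∈ F} is Gδ in ℝ
  have main : ∀ F : Set (ℝ × ℝ), IsClosed F → IsGδ {x : ℝ | (x, f x) ∈ F} := by
    intro F hF
    rcases F.eq_empty_or_nonempty with rfl | hFne
    · simpa using IsGδ.empty
    have hGm : ∀ m, Continuous (fun x : ℝ => infDist (x, g m x) F) :=
      fun m => (continuous_infDist_pt F).comp (continuous_id.prodMk (hgcont m))
    have hconv : ∀ x, Tendsto (fun m => infDist (x, g m x) F) atTop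
        (𝓝 (infDist (x, f x) F)) := by
      intro x
      exact ((continuous_infDist_pt F).tendsto _).comp
        ((tendsto_const_nhds (x := x)).prodMk_nhds (hgconv x))
    have hset : {x : ℝ | (x, f x) ∈ F} =
        ⋂ k : ℕ, ⋂ N : ℕ,
          ({x : ℝ | ∀ m, N ≤ m → 1 / ((k:ℝ) + 1) ≤ infDist (x, g m x) F})ᶜ := by
      ext x
      simp only [mem_iInter, mem_compl_iff, mem_setOf_eq]
      constructor
      · intro hx k N hcon
        have h0 : infDist (x, f x) F = 0 :=
          (hF.mem_iff_infDist_zero hFne).mp hx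
        have hk : (0:ℝ) < 1 / ((k:ℝ) + 1) := by positivity
        have : 1 / ((k:ℝ) + 1) ≤ infDist (x, f x) F := by
          apply ge_of_tendsto (hconv x)
          filter_upwards [eventually_ge_atTop N] with m hm using hcon m hm
        rw [h0] at this; linarith
      · intro hx
        by_contra hmem
        have hpos : 0 < infDist (x, f x) F := by
          rcases lt_or_eq_of_le (infDist_nonneg (x := (x, f x)) (s := F)) with h | h
          · exact h
          · exact absurd ((hF.mem_iff_infDist_zero hFne).mpr h.symm) hmem
        obtain ⟨k, hk⟩ := exists_nat_one_div_lt hpos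
        have : ∀ᶠ m in atTop, 1 / ((k:ℝ) + 1) ≤ infDist (x, g m x) F := by
          have := (hconv x).eventually_const_le hk
          exact this
        obtain ⟨N, hN⟩ := eventually_atTop.mp this
        exact hx k N hN
    rw [hset]
    apply IsGδ.iInter; intro k
    apply IsGδ.iInter; intro N
    apply IsOpen.isGδ
    apply isOpen_compl_iff.mpr
    have : {x : ℝ | ∀ m, N ≤ m → 1 / ((k:ℝ) + 1) ≤ infDist (x, g m x) F} =
        ⋂ m : ℕ, ⋂ _ : N ≤ m, {x : ℝ | 1 / ((k:ℝ) + 1) ≤ infDist (x, g m x) F} := by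
      ext x; simp [mem_iInter, mem_setOf_eq]
    rw [this]
    exact isClosed_iInter fun m => isClosed_iInter fun _ =>
      isClosed_le continuous_const (hGm m)
  -- define the retraction
  refine ⟨fun p => ⟨⟨((p : ℝ × ℝ).1, f (p : ℝ × ℝ).1), ?_⟩, rfl⟩, ?_, ?_⟩
  · exact ⟨(p.2 : (p : ℝ × ℝ) ∈ X).1, hfb _⟩
  · -- Gδ preimages
    intro C hC
    obtain ⟨D, hD, hDC⟩ := isClosed_induced_iff.mp hC
    obtain ⟨F, hFcl, hFD⟩ := isClosed_induced_iff.mp hD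
    have hA : IsGδ {x : ℝ | (x, f x) ∈ F} := main F hFcl
    have : (fun p : X => (⟨⟨((p : ℝ × ℝ).1, f (p : ℝ × ℝ).1),
          ⟨(p.2 : (p : ℝ × ℝ) ∈ X).1, hfb _⟩⟩, rfl⟩ :
          {p : X | (p : ℝ × ℝ).2 = f (p : ℝ × ℝ).1})) ⁻¹' C =
        (fun p : X => (p : ℝ × ℝ).1) ⁻¹' {x : ℝ | (x, f x) ∈ F} := by
      ext p
      simp only [mem_preimage, mem_setOf_eq]
      rw [← hDC, ← hFD]
      rfl
    rw [this]
    exact isGδ_preimage_of_continuous hA (continuous_fst.comp continuous_subtype_val)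
  · -- fixed points
    intro p hp
    have hp' : (p : ℝ × ℝ).2 = f (p : ℝ × ℝ).1 := hp
    apply Subtype.ext
    apply Prod.ext
    · rfl
    · exact hp'.symm
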